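/- Fix an integer t ≥ 0. The set of strings of the form [a_r,…,a₁, t+2, b₁,…,b_s], where [a₁,…,a_r] and [b₁,…,b_s] are conjugate strings, is exactly the smallest set of strings containing [2, t+2, 2] and closed under the two operations [e₁,…,e_v] ↦ [e₁+1, e₂,…,e_v, 2] and [e₁,…,e_v] ↦ [2, e₁,…,e_v + 1] (where in the last operation the final entry is increased by 1 and a 2 is prepended). -/

import Mathlib

/-- The value of the Hirzebruch–Jung continued fraction
`[b₁,…,b_r] = b₁ − 1/(b₂ − 1/(⋯ − 1/b_r))`.
(For the empty list we set the value to `0`; since `1/0 = 0` in `ℚ`, the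
recursion then gives the correct value `b_r` for singleton lists.) -/
def hjValue : List ℤ → ℚ
  | [] => 0
  | b :: l => (b : ℚ) - 1 / hjValue l

/-- A string is a nonempty list of integers, each at least `2`. -/
def IsString (l : List ℤ) : Prop := l ≠ [] ∧ ∀ b ∈ l, 2 ≤ b

/-- Two strings are conjugate if their Hirzebruch–Jung continued fraction
values are `n/a` and `n/(n−a)` for some integers `0 < a < n` with
`gcd(a,n) = 1`. -/
def Conjugate (l l' : List ℤ) : Prop :=
  ∃ n a : ℤ, 0 < a ∧ a < n ∧ IsCoprime a n ∧
    hjValue l = (n : ℚ) / (a : ℚ) ∧ hjValue l' = (n : ℚ) / ((n : ℚ) - (a : ℚ))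

/-- Convergent data: `(cfM l).1` is the (numerator, denominator) of the HJ value
of `l`; `(cfM l).2` is the same data for `l.dropLast` (when `l ≠ []`). -/
def cfM : List ℤ → (ℤ × ℤ) × (ℤ × ℤ)
  | [] => ((1, 0), (0, -1))
  | b :: t => ((b * (cfM t).1.1 - (cfM t).1.2, (cfM t).1.1),
               (b * (cfM t).2.1 - (cfM t).2.2, (cfM t).2.1))

lemma cfM_bounds : ∀ {l : List ℤ}, (∀ b ∈ l, 2 ≤ b) →
    0 ≤ (cfM l).1.2 ∧ (cfM l).1.2 < (cfM l).1.1 ∧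
    (cfM l).2.2 < (cfM l).2.1 ∧ 0 ≤ (cfM l).2.1 ∧
    1 ≤ (cfM l).1.1 - (cfM l).2.1 ∧ 0 ≤ (cfM l).1.2 - (cfM l).2.2 ∧
    (cfM l).1.2 - (cfM l).2.2 ≤ (cfM l).1.1 - (cfM l).2.1 := by
  intro l
  induction l with
  | nil => intro _; simp [cfM]
  | cons b t ih =>
    intro h
    have hb : 2 ≤ b := h b (by simp)
    obtain ⟨h1, h2, h3, h4, h5, h6, h7⟩ := ih (fun x hx => h x (by simp [hx]))
    simp only [cfM]
    refine ⟨?_, ?_, ?_, ?_, ?_, ?_, ?_⟩ <;> nlinarith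

lemma cfM_n2_pos {l : List ℤ} (h : ∀ b ∈ l, 2 ≤ b) (hne : l ≠ []) :
    1 ≤ (cfM l).2.1 := by
  cases l with
  | nil => exact absurd rfl hne
  | cons b t =>
    have hb : 2 ≤ b := h b (by simp)
    obtain ⟨h1, h2, h3, h4, h5, h6, h7⟩ := cfM_bounds (fun x hx => h x (List.mem_cons_of_mem _ hx))
    simp only [cfM]
    nlinarith

lemma cfM_det (l : List ℤ) :
    (cfM l).2.1 * (cfM l).1.2 - (cfM l).1.1 * (cfM l).2.2 = 1 := by
  induction l with
  | nil => simp [cfM]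
  | cons b t ih =>
    simp only [cfM]
    linear_combination ih

lemma cfM_coprime (l : List ℤ) : IsCoprime (cfM l).1.2 (cfM l).1.1 :=
  ⟨(cfM l).2.1, -(cfM l).2.2, by linarith [cfM_det l]⟩

lemma cfM_append (l : List ℤ) (x : ℤ) :
    cfM (l ++ [x]) = ((x * (cfM l).1.1 - (cfM l).2.1, x * (cfM l).1.2 - (cfM l).2.2),
      ((cfM l).1.1, (cfM l).1.2)) := by
  induction l with
  | nil => simp [cfM]
  | cons b t ih =>
    simp only [List.cons_append, cfM, List.append_eq, ih, Prod.mk.injEq]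
    set_option linter.unreachableTactic false in
    set_option linter.unusedTactic false in
    constructor
    · exact ⟨by ring, trivial⟩
    · constructor <;> ring


lemma cfM_n1_pos {l : List ℤ} (h : ∀ b ∈ l, 2 ≤ b) : 1 ≤ (cfM l).1.1 := by
  obtain ⟨h1, h2, _⟩ := cfM_bounds h; linarith

lemma cfM_d1_pos {l : List ℤ} (h : ∀ b ∈ l, 2 ≤ b) (hne : l ≠ []) :
    1 ≤ (cfM l).1.2 := by
  cases l with
  | nil => exact absurd rfl hne
  | cons b t =>
    have := cfM_n1_pos (l := t) (fun x hx => h x (List.mem_cons_of_mem _ hx))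
    simpa [cfM] using this

lemma hjValue_eq {l : List ℤ} (h : ∀ b ∈ l, 2 ≤ b) :
    hjValue l = ((cfM l).1.1 : ℚ) / ((cfM l).1.2 : ℚ) := by
  induction l with
  | nil => simp [hjValue, cfM]
  | cons b t ih =>
    have ht : ∀ x ∈ t, 2 ≤ x := fun x hx => h x (List.mem_cons_of_mem _ hx)
    have hpos : (0:ℤ) < (cfM t).1.1 := by linarith [cfM_n1_pos ht]
    have hne : ((cfM t).1.1 : ℚ) ≠ 0 := by exact_mod_cast hpos.ne'
    rw [hjValue, ih ht, one_div_div]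
    simp only [cfM]
    push_cast
    field_simp

def CP (la lb : List ℤ) : Prop :=
  (cfM la).1.1 = (cfM lb).1.1 ∧ (cfM la).1.2 + (cfM lb).1.2 = (cfM la).1.1

lemma CP.symm {la lb : List ℤ} (h : CP la lb) : CP lb la :=
  ⟨h.1.symm, by have := h.1; have := h.2; linarith⟩

lemma eq_of_value {l : List ℤ} (hne : l ≠ []) (h2 : ∀ b ∈ l, 2 ≤ b)
    {n a : ℤ} (ha : 0 < a) (hcop : IsCoprime a n)
    (hv : hjValue l = (n : ℚ) / (a : ℚ)) :
    (cfM l).1.1 = n ∧ (cfM l).1.2 = a := by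
  have hn1 : (1:ℤ) ≤ (cfM l).1.1 := cfM_n1_pos h2
  have hd1 : (1:ℤ) ≤ (cfM l).1.2 := cfM_d1_pos h2 hne
  have heq : ((cfM l).1.1 : ℚ) / ((cfM l).1.2 : ℚ) = (n : ℚ) / (a : ℚ) := by
    rw [← hjValue_eq h2, hv]
  have hd1Q : ((cfM l).1.2 : ℚ) ≠ 0 := by
    have : (0:ℤ) < (cfM l).1.2 := by linarith
    exact_mod_cast this.ne'
  have haQ : ((a : ℚ)) ≠ 0 := by exact_mod_cast ha.ne'
  rw [div_eq_div_iff hd1Q haQ] at heq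
  have hZ : (cfM l).1.1 * a = n * (cfM l).1.2 := by exact_mod_cast heq
  have hnpos : 0 < n := by nlinarith
  have hdvd1 : n ∣ (cfM l).1.1 := by
    refine hcop.symm.dvd_of_dvd_mul_right ?_
    exact ⟨(cfM l).1.2, hZ.symm ▸ rfl⟩
  have hdvd2 : (cfM l).1.1 ∣ n := by
    refine ((cfM_coprime l).symm).dvd_of_dvd_mul_right ?_
    exact ⟨a, hZ.symm⟩
  have heqn : (cfM l).1.1 = n := Int.dvd_antisymm (by linarith) (by linarith) hdvd2 hdvd1
  refine ⟨heqn, ?_⟩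
  have : (cfM l).1.1 * a = (cfM l).1.1 * (cfM l).1.2 := by rw [heqn] at hZ ⊢; linarith
  have := mul_left_cancel₀ (by linarith : (cfM l).1.1 ≠ 0) this
  linarith

lemma conj_iff {la lb : List ℤ} (hsa : IsString la) (hsb : IsString lb) :
    Conjugate la lb ↔ CP la lb := by
  constructor
  · rintro ⟨n, a, ha0, han, hcop, hva, hvb⟩
    have hcop' : IsCoprime (n - a) n := by
      have h' := (hcop.neg_left).add_mul_left_left 1
      rwa [show -a + n * 1 = n - a by ring] at h'
    have hb' : hjValue lb = (n : ℚ) / ((n - a : ℤ) : ℚ) := by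
      rw [hvb]; push_cast; ring_nf
    obtain ⟨e1, e2⟩ := eq_of_value hsa.1 hsa.2 ha0 hcop hva
    obtain ⟨e3, e4⟩ := eq_of_value hsb.1 hsb.2 (by linarith) hcop' hb'
    exact ⟨by rw [e1, e3], by rw [e2, e4, e1]; ring⟩
  · rintro ⟨h1, h2⟩
    refine ⟨(cfM la).1.1, (cfM la).1.2, ?_, ?_, (cfM_coprime la), ?_, ?_⟩
    · have := cfM_d1_pos hsa.2 hsa.1; linarith
    · have := cfM_bounds hsa.2; linarith [this.1, this.2.1]
    · exact hjValue_eq hsa.2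
    · have hd : (cfM lb).1.2 = (cfM la).1.1 - (cfM la).1.2 := by linarith
      rw [hjValue_eq hsb.2, ← h1, hd]
      push_cast
      ring

lemma cfM_sum {la lb : List ℤ} (hsa : IsString la) (hsb : IsString lb) (h : CP la lb) :
    (cfM la).2.1 + (cfM lb).2.1 = (cfM la).1.1 ∧
    (cfM la).2.2 - (cfM lb).2.2 = (cfM la).2.1 + (cfM la).1.2 - (cfM la).1.1 := by
  obtain ⟨hn, hd⟩ := h
  have deta := cfM_det la
  have detb := cfM_det lb
  set n1a := (cfM la).1.1 with hn1a
  set d1a := (cfM la).1.2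
  set n2a := (cfM la).2.1
  set d2a := (cfM la).2.2
  set n1b := (cfM lb).1.1
  set d1b := (cfM lb).1.2
  set n2b := (cfM lb).2.1
  set d2b := (cfM lb).2.2
  have key : (n2a + n2b) * d1a = n1a * (d2a + n2b - d2b) := by
    linear_combination deta - detb + n2b * hd + d2b * hn
  have hcop : IsCoprime n1a d1a := (cfM_coprime la).symm
  have hdvd : n1a ∣ (n2a + n2b) := by
    refine hcop.dvd_of_dvd_mul_right ⟨(d2a + n2b - d2b), key⟩
  obtain ⟨k, hk⟩ := hdvd
  have ba := cfM_bounds hsa.2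
  have bb := cfM_bounds hsb.2
  have pa := cfM_n2_pos hsa.2 hsa.1
  have pb := cfM_n2_pos hsb.2 hsb.1
  have hda := cfM_d1_pos hsa.2 hsa.1
  have hdb := cfM_d1_pos hsb.2 hsb.1
  have hn2 : 2 ≤ n1a := by linarith
  have hb1 : n2a ≤ n1a - 1 := by linarith [ba.2.2.2.2.1]
  have hb2 : n2b ≤ n1a - 1 := by linarith [bb.2.2.2.2.1]
  have hk1 : k = 1 := by nlinarith
  have hsum : n2a + n2b = n1a := by rw [hk, hk1, mul_one]
  refine ⟨hsum, ?_⟩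
  have key2 : n1a * (d2a - d2b) = n1a * (n2a + d1a - n1a) := by
    linear_combination -deta + detb - d2b * hn - d1b * hsum + (n2a - n1a) * hd
  exact mul_left_cancel₀ (by linarith : n1a ≠ 0) key2

lemma CP_opA {ra lb : List ℤ} {e : ℤ} (hsa : ∀ b ∈ ra ++ [e], 2 ≤ b) (hsb : IsString lb)
    (h : CP (ra ++ [e]) lb) : CP (ra ++ [e + 1]) (lb ++ [2]) := by
  obtain ⟨hsum1, hsum2⟩ := cfM_sum ⟨by simp, hsa⟩ hsb h
  obtain ⟨hn, hd⟩ := h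
  simp only [cfM_append] at hsum1 hsum2 hn hd
  constructor
  · simp only [cfM_append]; linear_combination 2 * hn + hsum1
  · simp only [cfM_append]; linear_combination 2 * hd + hsum2

lemma CP_opB {la rb : List ℤ} {e : ℤ} (hsa : IsString la) (hsb : ∀ b ∈ rb ++ [e], 2 ≤ b)
    (h : CP la (rb ++ [e])) : CP (la ++ [2]) (rb ++ [e + 1]) :=
  (CP_opA hsb hsa h.symm).symm

lemma CP_peel {ra rb : List ℤ} {cb : ℤ} (hsa : ∀ b ∈ ra ++ [(2:ℤ)], 2 ≤ b)
    (hsb : ∀ b ∈ rb ++ [cb], 2 ≤ b)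
    (h : CP (ra ++ [2]) (rb ++ [cb])) : CP ra (rb ++ [cb - 1]) := by
  obtain ⟨hsum1, hsum2⟩ := cfM_sum ⟨by simp, hsa⟩ ⟨by simp, hsb⟩ h
  obtain ⟨hn, hd⟩ := h
  simp only [cfM_append] at hsum1 hsum2 hn hd
  constructor
  · simp only [cfM_append]; linear_combination hn + hsum1
  · simp only [cfM_append]; linear_combination hd + hsum2

lemma mem_gen (t : ℕ) (S : Set (List ℤ))
    (hbase : [2, (t : ℤ) + 2, 2] ∈ S)
    (hop1 : ∀ (e : ℤ) (es : List ℤ), e :: es ∈ S → (e + 1) :: (es ++ [2]) ∈ S)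
    (hop2 : ∀ (es : List ℤ) (e : ℤ), es ++ [e] ∈ S → 2 :: (es ++ [e + 1]) ∈ S) :
    ∀ k (la lb : List ℤ), la.length + lb.length ≤ k → IsString la → IsString lb →
      CP la lb → la.reverse ++ ((t : ℤ) + 2) :: lb ∈ S := by
  intro k
  induction k with
  | zero =>
    intro la lb hlen hsa _ _
    have := List.length_pos_iff.2 hsa.1
    omega
  | succ k ih =>
    intro la lb hlen hsa hsb hcp
    obtain ⟨ra, ca, rfl⟩ : ∃ ra ca, la = ra ++ [ca] := by
      rcases List.eq_nil_or_concat la with h | ⟨ra, ca, h⟩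
      · exact absurd h hsa.1
      · exact ⟨ra, ca, by simpa [List.concat_eq_append] using h⟩
    obtain ⟨rb, cb, rfl⟩ : ∃ rb cb, lb = rb ++ [cb] := by
      rcases List.eq_nil_or_concat lb with h | ⟨rb, cb, h⟩
      · exact absurd h hsb.1
      · exact ⟨rb, cb, by simpa [List.concat_eq_append] using h⟩
    have hra2 : ∀ b ∈ ra, 2 ≤ b := fun b hb => hsa.2 b (by simp [hb])
    have hrb2 : ∀ b ∈ rb, 2 ≤ b := fun b hb => hsb.2 b (by simp [hb])
    have hca : 2 ≤ ca := hsa.2 ca (by simp)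
    have hcb : 2 ≤ cb := hsb.2 cb (by simp)
    obtain ⟨hsum1, hsum2⟩ := cfM_sum hsa hsb hcp
    have hn := hcp.1
    have hd := hcp.2
    simp only [cfM_append] at hsum1 hsum2 hn hd
    have ba := cfM_bounds hra2
    have bb := cfM_bounds hrb2
    obtain ⟨ba1, ba2, ba3, ba4, ba5, ba6, ba7⟩ := ba
    obtain ⟨bb1, bb2, bb3, bb4, bb5, bb6, bb7⟩ := bb
    have hlen' : ra.length + rb.length + 2 ≤ k + 1 := by
      simpa [Nat.add_assoc, Nat.add_comm, Nat.add_left_comm] using hlen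
    rcases (by omega : ca = 2 ∨ 3 ≤ ca) with hca2 | hca3 <;>
      rcases (by omega : cb = 2 ∨ 3 ≤ cb) with hcb2 | hcb3
    · -- ca = 2, cb = 2 : both lists must be [2]; base case
      subst hca2; subst hcb2
      have hr0 : (cfM ra).2.1 + (cfM rb).2.1 = 0 := by linarith
      by_cases hra : ra = []
      · by_cases hrb : rb = []
        · subst hra; subst hrb
          simpa using hbase
        · have := cfM_n2_pos hrb2 hrb
          linarith
      · have := cfM_n2_pos hra2 hra
        linarith
    · -- ca = 2, cb ≥ 3 : peel on the right
      subst hca2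
      have hra : ra ≠ [] := by
        intro h; subst h
        simp only [cfM] at hn hsum1
        have hP : (cfM rb).1.1 = 1 := by linarith
        have hcbP : cb * (cfM rb).1.1 = cb := by rw [hP, mul_one]
        linarith
      have hcp' : CP ra (rb ++ [cb - 1]) := CP_peel hsa.2 hsb.2 hcp
      have hsb' : IsString (rb ++ [cb - 1]) := by
        refine ⟨by simp, fun b hb => ?_⟩
        rcases List.mem_append.1 hb with h | h
        · exact hrb2 b h
        · simp at h; omega
      have hmem := ih ra (rb ++ [cb - 1]) (by simp at hlen' ⊢; omega) ⟨hra, hra2⟩ hsb' hcp'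
      have hmem' : (ra.reverse ++ ((t : ℤ) + 2) :: rb) ++ [cb - 1] ∈ S := by
        simpa [List.append_assoc] using hmem
      have hres := hop2 _ _ hmem'
      have hfix : cb - 1 + 1 = cb := by ring
      rw [hfix] at hres
      simpa [List.append_assoc] using hres
    · -- ca ≥ 3, cb = 2 : peel on the left
      subst hcb2
      have hrb : rb ≠ [] := by
        intro h; subst h
        simp only [cfM] at hn hsum1
        have hp : (cfM ra).1.1 = 1 := by linarith
        have hcap : ca * (cfM ra).1.1 = ca := by rw [hp, mul_one]
        linarith
      have hcp' : CP (ra ++ [ca - 1]) rb := (CP_peel hsb.2 hsa.2 hcp.symm).symm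
      have hsa' : IsString (ra ++ [ca - 1]) := by
        refine ⟨by simp, fun b hb => ?_⟩
        rcases List.mem_append.1 hb with h | h
        · exact hra2 b h
        · simp at h; omega
      have hmem := ih (ra ++ [ca - 1]) rb (by simp at hlen' ⊢; omega) hsa' ⟨hrb, hrb2⟩ hcp'
      have hmem' : (ca - 1) :: (ra.reverse ++ ((t : ℤ) + 2) :: rb) ∈ S := by
        simpa [List.append_assoc] using hmem
      have hres := hop1 _ _ hmem'
      have hfix : ca - 1 + 1 = ca := by ring
      rw [hfix] at hres
      simpa [List.append_assoc] using hres
    · -- ca ≥ 3, cb ≥ 3 : impossible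
      exfalso
      have h1 : 3 * (cfM ra).1.1 ≤ ca * (cfM ra).1.1 := by nlinarith
      have h2 : 3 * (cfM rb).1.1 ≤ cb * (cfM rb).1.1 := by nlinarith
      linarith

/-- For fixed `t ≥ 0`, the set of strings of the form
`[a_r,…,a₁, t+2, b₁,…,b_s]` with `[a₁,…,a_r]`, `[b₁,…,b_s]` conjugate strings
is exactly the smallest set of strings containing `[2, t+2, 2]` and closed
under the two operations `[e₁,…,e_v] ↦ [e₁+1, e₂,…,e_v, 2]` and
`[e₁,…,e_v] ↦ [2, e₁,…,e_v + 1]`. -/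
theorem stmt_18 (t : ℕ) :
    {l : List ℤ | ∃ la lb : List ℤ, IsString la ∧ IsString lb ∧
        Conjugate la lb ∧ l = la.reverse ++ ((t : ℤ) + 2) :: lb} =
      ⋂₀ {S : Set (List ℤ) |
        (∀ l ∈ S, IsString l) ∧
        [2, (t : ℤ) + 2, 2] ∈ S ∧
        (∀ (e : ℤ) (es : List ℤ), e :: es ∈ S → (e + 1) :: (es ++ [2]) ∈ S) ∧
        (∀ (es : List ℤ) (e : ℤ), es ++ [e] ∈ S → 2 :: (es ++ [e + 1]) ∈ S)} := by
  apply Set.eq_of_subset_of_subset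
  · rintro l ⟨la, lb, hsa, hsb, hconj, rfl⟩ S hS
    obtain ⟨hstr, hbase, hop1, hop2⟩ := hS
    exact mem_gen t S hbase hop1 hop2 (la.length + lb.length) la lb le_rfl hsa hsb
      ((conj_iff hsa hsb).1 hconj)
  · intro l hl
    refine hl {l : List ℤ | ∃ la lb : List ℤ, IsString la ∧ IsString lb ∧
        Conjugate la lb ∧ l = la.reverse ++ ((t : ℤ) + 2) :: lb} ⟨?_, ?_, ?_, ?_⟩
    · rintro x ⟨la, lb, hsa, hsb, -, rfl⟩
      refine ⟨by simp, fun b hb => ?_⟩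
      rcases List.mem_append.1 hb with h | h
      · exact hsa.2 b (List.mem_reverse.1 h)
      · rcases List.mem_cons.1 h with h | h
        · subst h; omega
        · exact hsb.2 b h
    · refine ⟨[2], [2], ⟨by simp, by simp⟩, ⟨by simp, by simp⟩, ?_, by simp⟩
      refine (conj_iff ⟨by simp, by simp⟩ ⟨by simp, by simp⟩).2 ?_
      constructor <;> norm_num [cfM]
    · rintro e es ⟨la, lb, hsa, hsb, hconj, heq⟩
      cases hrev : la.reverse with
      | nil => exact absurd (by simpa using congrArg List.reverse hrev) hsa.1
      | cons x xs =>
        rw [hrev] at heq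
        have he : e = x := by simpa using congrArg (fun l => l.headI) heq
        have hes : es = xs ++ ((t : ℤ) + 2) :: lb := by
          simpa using congrArg List.tail heq
        subst he
        have hla : la = xs.reverse ++ [e] := by
          rw [← List.reverse_reverse la, hrev, List.reverse_cons]
        have hcp : CP (xs.reverse ++ [e]) lb := by
          rw [← hla]; exact (conj_iff hsa hsb).1 hconj
        have h2a : ∀ b ∈ xs.reverse ++ [e], 2 ≤ b := by rw [← hla]; exact hsa.2
        have hcp' := CP_opA h2a hsb hcp
        have hsa' : IsString (xs.reverse ++ [e + 1]) := by
          refine ⟨by simp, fun b hb => ?_⟩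
          rcases List.mem_append.1 hb with h | h
          · exact h2a b (List.mem_append.2 (Or.inl h))
          · have : 2 ≤ e := h2a e (by simp)
            simp at h; omega
        have hsb' : IsString (lb ++ [2]) := by
          refine ⟨by simp, fun b hb => ?_⟩
          rcases List.mem_append.1 hb with h | h
          · exact hsb.2 b h
          · simp at h; omega
        refine ⟨xs.reverse ++ [e + 1], lb ++ [2], hsa', hsb',
          (conj_iff hsa' hsb').2 hcp', ?_⟩
        rw [hes]
        simp [List.append_assoc]
    · rintro es e ⟨la, lb, hsa, hsb, hconj, heq⟩
      obtain ⟨rb, cb, rfl⟩ : ∃ rb cb, lb = rb ++ [cb] := by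
        rcases List.eq_nil_or_concat lb with h | ⟨rb, cb, h⟩
        · exact absurd h hsb.1
        · exact ⟨rb, cb, by simpa [List.concat_eq_append] using h⟩
      have heq' : es ++ [e] = (la.reverse ++ ((t : ℤ) + 2) :: rb) ++ [cb] := by
        rw [heq]; simp [List.append_assoc]
      obtain ⟨hes, hecb⟩ := List.append_inj' heq' (by simp)
      have he : e = cb := by simpa using hecb
      subst he
      have hcp : CP la (rb ++ [e]) := (conj_iff hsa hsb).1 hconj
      have hcp' := CP_opB hsa hsb.2 hcp
      have hsa' : IsString (la ++ [2]) := by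
        refine ⟨by simp, fun b hb => ?_⟩
        rcases List.mem_append.1 hb with h | h
        · exact hsa.2 b h
        · simp at h; omega
      have hsb' : IsString (rb ++ [e + 1]) := by
        refine ⟨by simp, fun b hb => ?_⟩
        rcases List.mem_append.1 hb with h | h
        · exact hsb.2 b (List.mem_append.2 (Or.inl h))
        · have : 2 ≤ e := hsb.2 e (by simp)
          simp at h; omega
      refine ⟨la ++ [2], rb ++ [e + 1], hsa', hsb',
        (conj_iff hsa' hsb').2 hcp', ?_⟩
      rw [hes]
      simp [List.append_assoc]
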